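/- (Corollary 3) Fix ε ∈ (0, 1), σ² > 0 and P_E > 0, and set b = (P_E/σ²) ln(1 + 0.5ε). Consider the asymptotic achievable rate as a function of the transmit power P_t > 0: f(P_t) = (1/2) ln(1 + P_t/σ²) / (1 + (P_t/P_E)/ln(1 + 0.5ε)). Then f attains a unique maximum on (0, ∞) at P*_{t,∞} = σ² γ*, where γ* is the unique positive solution of (1 + γ) ln(1 + γ) − γ = b. -/

import Mathlib

set_option maxHeartbeats 1000000

open Real Set

/-- Corollary 3: the asymptotic achievable rate
`f(Pt) = (1/2) ln(1 + Pt/σ²) / (1 + (Pt/PE)/ln(1 + ε/2))` attains a unique maximum over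
`Pt ∈ (0, ∞)` at `Pt = σ² γ*`, where `γ*` is the unique positive solution of
`(1 + γ) ln(1 + γ) − γ = (PE/σ²) ln(1 + ε/2)`. -/
theorem optimal_transmit_power (ε σ2 PE : ℝ) (hε0 : 0 < ε) (hε1 : ε < 1)
    (hσ2 : 0 < σ2) (hPE : 0 < PE)
    (γstar : ℝ) (hγpos : 0 < γstar)
    (hγeq : (1 + γstar) * Real.log (1 + γstar) - γstar = PE / σ2 * Real.log (1 + 0.5 * ε)) :
    ∀ Pt : ℝ, 0 < Pt → Pt ≠ σ2 * γstar →
      (1 / 2 * Real.log (1 + Pt / σ2)) / (1 + (Pt / PE) / Real.log (1 + 0.5 * ε)) <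
        (1 / 2 * Real.log (1 + (σ2 * γstar) / σ2)) /
          (1 + ((σ2 * γstar) / PE) / Real.log (1 + 0.5 * ε)) := by
  intro Pt hPt hne
  have hL : 0 < Real.log (1 + 0.5 * ε) := Real.log_pos (by linarith)
  set L := Real.log (1 + 0.5 * ε) with hLdef
  have hγ : 0 < Pt / σ2 := div_pos hPt hσ2
  have hs : (σ2 * γstar) / σ2 = γstar := by field_simp
  rw [hs]
  set γ := Pt / σ2 with hγdef
  have hPtγ : Pt = σ2 * γ := by rw [hγdef]; field_simp
  have h1γ : (0:ℝ) < 1 + γ := by linarith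
  have h1γs : (0:ℝ) < 1 + γstar := by linarith
  have hneγ : γ ≠ γstar := by
    intro h
    exact hne (by rw [hPtγ, h])
  -- strict concavity of log: log t < t - 1 for t ≠ 1
  have hq : (1 + γ) / (1 + γstar) ≠ 1 := by
    intro h
    rw [div_eq_one_iff_eq h1γs.ne'] at h
    exact hneγ (by linarith)
  have hkey := Real.log_lt_sub_one_of_pos (div_pos h1γ h1γs) hq
  rw [Real.log_div h1γ.ne' h1γs.ne'] at hkey
  have hkey2 : (1 + γstar) * (Real.log (1 + γ) - Real.log (1 + γstar)) < γ - γstar := by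
    have h3 : ((1 + γ) / (1 + γstar) - 1) * (1 + γstar) = γ - γstar := by field_simp; ring
    nlinarith [mul_lt_mul_of_pos_right hkey h1γs]
  set lg := Real.log (1 + γ) with hlgdef
  set lgs := Real.log (1 + γstar) with hlgsdef
  have hlgs : 0 < lgs := Real.log_pos (by linarith)
  have hlg : 0 ≤ lg := Real.log_nonneg (by linarith)
  have hPEL : 0 < PE * L := mul_pos hPE hL
  -- rewrite both sides with cleared denominators
  have e1 : (1 / 2 * lg) / (1 + (Pt / PE) / L) = (PE * L * lg) / (2 * (PE * L + Pt)) := by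
    rw [hPtγ]
    field_simp
  have e2 : (1 / 2 * lgs) / (1 + ((σ2 * γstar) / PE) / L)
      = (PE * L * lgs) / (2 * (PE * L + σ2 * γstar)) := by
    field_simp
  rw [e1, e2, div_lt_div_iff₀ (by nlinarith) (by nlinarith)]
  -- from the defining equation: PE * L = σ2 * ((1+γstar)*lgs - γstar)
  have hb : PE * L = σ2 * ((1 + γstar) * lgs - γstar) := by
    field_simp at hγeq
    linarith [hγeq]
  rw [hPtγ]
  have core : lg * (PE * L + σ2 * γstar) < lgs * (PE * L + σ2 * γ) := by
    rw [hb]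
    nlinarith [mul_lt_mul_of_pos_left hkey2 (mul_pos hσ2 hlgs)]
  nlinarith [mul_lt_mul_of_pos_left core hPEL]
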